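/- Assume the root system is simply laced, i.e. a_{i,j} ∈ {0, −1} for all distinct i, j ∈ I. Let λ, μ ∈ M be dominant weights, let N ≥ 1 be an integer, and let β be a positive root which is a sum of pairwise distinct simple roots, say β = α_{j_1} + ⋯ + α_{j_t} with j_1, …, j_t ∈ I pairwise distinct. Assume: (1) for every i ∈ I with min{⟨λ, α_i^∨⟩, ⟨μ, α_i^∨⟩} < N, the element β − α_i is neither zero nor a positive root; (2) λ + μ − Nβ is dominant. Then there exists a permutation σ of {1, …, t} such that the dominance system D((N, …, N); μ, λ; j_{σ(1)}, …, j_{σ(t)}) holds. -/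

import Mathlib

open Set Module Function

/-- A root system: a root pairing whose roots and coroots span (the definition of `RootSystem`
in the older Mathlib, where it was a structure extending `RootPairing`). -/
structure RootSystem (ι R M N : Type*) [CommRing R]
    [AddCommGroup M] [Module R M] [AddCommGroup N] [Module R N]
    extends RootPairing ι R M N where
  span_root_eq_top : Submodule.span R (range root) = ⊤
  span_coroot_eq_top : Submodule.span R (range coroot) = ⊤

/-- `b : I → ι` indexes a base of simple roots of the root system `P`: the map is injective,
the simple roots are linearly independent, and every root is either a nonnegative or a
nonpositive integer combination of the simple roots. -/
structure RootSystem.IsBase {ι M N I : Type*} [Fintype I]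
    [AddCommGroup M] [Module ℝ M] [AddCommGroup N] [Module ℝ N]
    (P : RootSystem ι ℝ M N) (b : I → ι) : Prop where
  injective : Function.Injective b
  linearIndependent : LinearIndependent ℝ fun i : I => P.root (b i)
  exists_coeffs : ∀ j : ι,
    (∃ c : I → ℕ, P.root j = ∑ i, (c i : ℝ) • P.root (b i)) ∨
    (∃ c : I → ℕ, P.root j = - ∑ i, (c i : ℝ) • P.root (b i))

/-- The root indexed by `j` is a positive root with respect to the base `b`: it is a
nonnegative integer combination of the simple roots. -/
def RootSystem.IsPositiveRoot {ι M N I : Type*} [Fintype I]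
    [AddCommGroup M] [Module ℝ M] [AddCommGroup N] [Module ℝ N]
    (P : RootSystem ι ℝ M N) (b : I → ι) (j : ι) : Prop :=
  ∃ c : I → ℕ, P.root j = ∑ i, (c i : ℝ) • P.root (b i)

/-- A weight `x ∈ M` is dominant if its pairing with every simple coroot is nonnegative. -/
def RootSystem.IsDominant {ι M N I : Type*}
    [AddCommGroup M] [Module ℝ M] [AddCommGroup N] [Module ℝ N]
    (P : RootSystem ι ℝ M N) (b : I → ι) (x : M) : Prop :=
  ∀ i : I, 0 ≤ P.coroot' (b i) x

/-- The closed dominant (fundamental) chamber `C_f`. -/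
def RootSystem.chamber {ι M N I : Type*}
    [AddCommGroup M] [Module ℝ M] [AddCommGroup N] [Module ℝ N]
    (P : RootSystem ι ℝ M N) (b : I → ι) : Set M :=
  {x : M | P.IsDominant b x}

/-- The polytope `P_{λ,μ}`: the convex hull of the orbit-translate `{λ + w μ : w ∈ W}`. -/
def RootSystem.orbitPolytope {ι M N : Type*}
    [AddCommGroup M] [Module ℝ M] [AddCommGroup N] [Module ℝ N]
    (P : RootSystem ι ℝ M N) (lam mu : M) : Set M :=
  convexHull ℝ {x : M | ∃ w ∈ P.weylGroup, x = lam + w • mu}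
/-- The dominance system `D((k_r); λ, μ; i_1, …, i_t)` of the paper:
`⟨μ, α_{i_r}^∨⟩ ≥ k_r + Σ_{s<r} k_s·a_{i_s,i_r}` for all `r` (for `r = 1` this is
`⟨μ, α_{i_1}^∨⟩ ≥ k_1`), and `⟨λ, α_{i_r}^∨⟩ ≥ k_r + Σ_{s>r} k_s·a_{i_s,i_r}` for all `r`
(for `r = t` this is `⟨λ, α_{i_t}^∨⟩ ≥ k_t`), where `a_{i,j} = ⟨α_i, α_j^∨⟩` are the
Cartan integers. -/
def RootSystem.DomSys {ι M N I : Type*}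
    [AddCommGroup M] [Module ℝ M] [AddCommGroup N] [Module ℝ N]
    (P : RootSystem ι ℝ M N) (b : I → ι) {t : ℕ}
    (k : Fin t → ℕ) (lam mu : M) (idx : Fin t → I) : Prop :=
  (∀ r : Fin t,
    (k r : ℝ) + ∑ s ∈ Finset.univ.filter (· < r),
      (k s : ℝ) * P.pairing (b (idx s)) (b (idx r)) ≤ P.coroot' (b (idx r)) mu) ∧
  (∀ r : Fin t,
    (k r : ℝ) + ∑ s ∈ Finset.univ.filter (r < ·),
      (k s : ℝ) * P.pairing (b (idx s)) (b (idx r)) ≤ P.coroot' (b (idx r)) lam)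

theorem exists_good_order {V : Type*} [DecidableEq V] (adj : V → V → Prop) [DecidableRel adj]
    (hsymm : ∀ x y, adj x y → adj y x) (hirr : ∀ x, ¬ adj x x)
    (H1 : ∀ T : Finset V, T.Nonempty → ∃ v ∈ T, (T.filter (adj v)).card ≤ 1)
    (S : Finset V) :
    ∃ ord : V → ℤ, Set.InjOn ord ↑S ∧ ∀ u ∈ S,
      ((∃ x ∈ S, adj x u ∧ ord x < ord u) ∨ (S.filter (adj u)).card ≤ 1) ∧
      ((∃ x ∈ S, adj x u ∧ ord u < ord x) ∨ (S.filter (adj u)).card ≤ 1) := by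
  induction S using Finset.strongInduction with
  | _ S ih =>
  rcases S.eq_empty_or_nonempty with rfl | hS
  · exact ⟨0, by simp [Set.InjOn], by simp⟩
  obtain ⟨v, hvS, hdegv⟩ := H1 S hS
  obtain ⟨ord, hinj, hcond⟩ := ih (S.erase v) (Finset.erase_ssubset hvS)
  have hfv : (S.erase v).filter (adj v) = S.filter (adj v) := by
    rw [Finset.filter_erase]
    exact Finset.erase_eq_of_notMem (fun h => hirr v (Finset.mem_filter.mp h).2)
  have hfilter_eq : ∀ u, ¬ adj u v → (S.erase v).filter (adj u) = S.filter (adj u) := by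
    intro u hu
    rw [Finset.filter_erase]
    exact Finset.erase_eq_of_notMem (fun h => hu (Finset.mem_filter.mp h).2)
  rcases ((S.erase v).filter (adj v)).eq_empty_or_nonempty with hnb | ⟨w, hw⟩
  · -- v has no neighbour in S at all
    have hnbS : S.filter (adj v) = ∅ := by rw [← hfv, hnb]
    have hnoadj : ∀ u ∈ S, ¬ adj u v := by
      intro u hu hadj
      have : u ∈ S.filter (adj v) := Finset.mem_filter.mpr ⟨hu, hsymm u v hadj⟩
      simp [hnbS] at this
    obtain ⟨m, hmlt⟩ : ∃ m : ℤ, ∀ x ∈ S.erase v, m < ord x := by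
      rcases (S.erase v).eq_empty_or_nonempty with h | h
      · exact ⟨0, by simp [h]⟩
      · refine ⟨((S.erase v).image ord).min' (h.image ord) - 1, fun x hx => ?_⟩
        have := Finset.min'_le ((S.erase v).image ord) (ord x) (Finset.mem_image_of_mem ord hx)
        omega
    refine ⟨fun x => if x = v then m else ord x, ?_, ?_⟩
    · intro x hx y hy hxy
      simp only at hxy
      by_cases hxv : x = v <;> by_cases hyv : y = v
      · rw [hxv, hyv]
      · exfalso
        rw [if_pos hxv, if_neg hyv] at hxy
        have := hmlt y (Finset.mem_erase.mpr ⟨hyv, hy⟩)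
        omega
      · exfalso
        rw [if_neg hxv, if_pos hyv] at hxy
        have := hmlt x (Finset.mem_erase.mpr ⟨hxv, hx⟩)
        omega
      · simp only [if_neg hxv, if_neg hyv] at hxy
        exact hinj (Finset.mem_coe.mpr (Finset.mem_erase.mpr ⟨hxv, hx⟩))
          (Finset.mem_coe.mpr (Finset.mem_erase.mpr ⟨hyv, hy⟩)) hxy
    · intro u hu
      by_cases huv : u = v
      · subst huv
        have : (S.filter (adj u)).card ≤ 1 := by rw [hnbS]; simp
        exact ⟨Or.inr this, Or.inr this⟩
      · have hu' : u ∈ S.erase v := Finset.mem_erase.mpr ⟨huv, hu⟩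
        have hcard : (S.filter (adj u)).card = ((S.erase v).filter (adj u)).card := by
          rw [hfilter_eq u (hnoadj u hu)]
        have hcard' : ((S.erase v).filter (adj u)).card ≤ 1 → (S.filter (adj u)).card ≤ 1 := by
          omega
        obtain ⟨h1, h2⟩ := hcond u hu'
        constructor
        · rcases h1 with ⟨x, hx, hadj, hlt⟩ | h
          · refine Or.inl ⟨x, Finset.mem_of_mem_erase hx, hadj, ?_⟩
            have hxv : x ≠ v := (Finset.mem_erase.mp hx).1
            simpa [if_neg hxv, if_neg huv] using hlt
          · exact Or.inr (hcard' h)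
        · rcases h2 with ⟨x, hx, hadj, hlt⟩ | h
          · refine Or.inl ⟨x, Finset.mem_of_mem_erase hx, hadj, ?_⟩
            have hxv : x ≠ v := (Finset.mem_erase.mp hx).1
            simpa [if_neg hxv, if_neg huv] using hlt
          · exact Or.inr (hcard' h)
  · -- v has exactly one neighbour w
    have hwS' : w ∈ S.erase v := (Finset.mem_filter.mp hw).1
    have hadjvw : adj v w := (Finset.mem_filter.mp hw).2
    have hwv : w ≠ v := (Finset.mem_erase.mp hwS').1
    have hwS : w ∈ S := Finset.mem_of_mem_erase hwS'
    have hcard1 : (S.filter (adj v)).card = 1 := by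
      have h1 : 1 ≤ (S.filter (adj v)).card :=
        Finset.card_pos.mpr ⟨w, hfv ▸ hw⟩
      omega
    have huniq : ∀ y ∈ S, adj v y → y = w := by
      intro y hy hadj
      have h1 : y ∈ S.filter (adj v) := Finset.mem_filter.mpr ⟨hy, hadj⟩
      have h2 : w ∈ S.filter (adj v) := hfv ▸ hw
      exact Finset.card_le_one.mp (le_of_eq hcard1) y h1 w h2
    have hnoadj : ∀ u ∈ S, u ≠ w → ¬ adj u v := by
      intro u hu huw hadj
      exact huw (huniq u hu (hsymm u v hadj))
    -- main construction given choice of e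
    have key : ∀ e : ℤ, (e = 1 ∨ e = -1) →
        ((∃ x ∈ S, adj x w ∧ (if x = v then 2 * ord w + e else 2 * ord x) < 2 * ord w) ∨
          (S.filter (adj w)).card ≤ 1) →
        ((∃ x ∈ S, adj x w ∧ 2 * ord w < (if x = v then 2 * ord w + e else 2 * ord x)) ∨
          (S.filter (adj w)).card ≤ 1) →
        ∃ ord2 : V → ℤ, Set.InjOn ord2 ↑S ∧ ∀ u ∈ S,
          ((∃ x ∈ S, adj x u ∧ ord2 x < ord2 u) ∨ (S.filter (adj u)).card ≤ 1) ∧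
          ((∃ x ∈ S, adj x u ∧ ord2 u < ord2 x) ∨ (S.filter (adj u)).card ≤ 1) := by
      intro e he hwleft hwright
      refine ⟨fun x => if x = v then 2 * ord w + e else 2 * ord x, ?_, ?_⟩
      · clear hwleft hwright
        intro x hx y hy hxy
        simp only at hxy
        by_cases hxv : x = v <;> by_cases hyv : y = v
        · rw [hxv, hyv]
        · simp only [if_pos, if_neg hyv, hxv] at hxy
          omega
        · simp only [if_pos, if_neg hxv, hyv] at hxy
          omega
        · simp only [if_neg hxv, if_neg hyv] at hxy
          exact hinj (Finset.mem_coe.mpr (Finset.mem_erase.mpr ⟨hxv, hx⟩))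
            (Finset.mem_coe.mpr (Finset.mem_erase.mpr ⟨hyv, hy⟩)) (by omega)
      · intro u hu
        by_cases huv : u = v
        · subst huv
          exact ⟨Or.inr (le_of_eq hcard1), Or.inr (le_of_eq hcard1)⟩
        by_cases huw : u = w
        · subst huw
          constructor
          · rcases hwleft with ⟨x, hx, hadj, hlt⟩ | h
            · exact Or.inl ⟨x, hx, hadj, by simpa [if_neg hwv] using hlt⟩
            · exact Or.inr h
          · rcases hwright with ⟨x, hx, hadj, hlt⟩ | h
            · exact Or.inl ⟨x, hx, hadj, by simpa [if_neg hwv] using hlt⟩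
            · exact Or.inr h
        · have hu' : u ∈ S.erase v := Finset.mem_erase.mpr ⟨huv, hu⟩
          have hcard : (S.filter (adj u)).card = ((S.erase v).filter (adj u)).card := by
            rw [hfilter_eq u (hnoadj u hu huw)]
          obtain ⟨h1, h2⟩ := hcond u hu'
          constructor
          · rcases h1 with ⟨x, hx, hadj, hlt⟩ | h
            · refine Or.inl ⟨x, Finset.mem_of_mem_erase hx, hadj, ?_⟩
              have hxv : x ≠ v := (Finset.mem_erase.mp hx).1
              simp only [if_neg hxv, if_neg huv]
              omega
            · exact Or.inr (by omega)
          · rcases h2 with ⟨x, hx, hadj, hlt⟩ | h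
            · refine Or.inl ⟨x, Finset.mem_of_mem_erase hx, hadj, ?_⟩
              have hxv : x ≠ v := (Finset.mem_erase.mp hx).1
              simp only [if_neg hxv, if_neg huv]
              omega
            · exact Or.inr (by omega)
    by_cases hz : ∃ z ∈ S.erase v, adj w z ∧ ord z < ord w
    · obtain ⟨z, hzS', hadjwz, hzlt⟩ := hz
      have hzv : z ≠ v := (Finset.mem_erase.mp hzS').1
      refine key 1 (Or.inl rfl) ?_ ?_
      · refine Or.inl ⟨z, Finset.mem_of_mem_erase hzS', hsymm w z hadjwz, ?_⟩
        rw [if_neg hzv]; omega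
      · refine Or.inl ⟨v, hvS, hadjvw, ?_⟩
        rw [if_pos rfl]; omega
    · refine key (-1) (Or.inr rfl) ?_ ?_
      · refine Or.inl ⟨v, hvS, hadjvw, ?_⟩
        rw [if_pos rfl]; omega
      · rcases ((S.erase v).filter (adj w)).eq_empty_or_nonempty with hTw | ⟨z, hzT⟩
        · refine Or.inr ?_
          have hsub : S.filter (adj w) ⊆ {v} := by
            intro y hy
            obtain ⟨hyS, hadjwy⟩ := Finset.mem_filter.mp hy
            by_contra hyv
            have : y ∈ (S.erase v).filter (adj w) := Finset.mem_filter.mpr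
              ⟨Finset.mem_erase.mpr ⟨by simpa using hyv, hyS⟩, hadjwy⟩
            simp [hTw] at this
          calc (S.filter (adj w)).card ≤ ({v} : Finset V).card := Finset.card_le_card hsub
            _ = 1 := Finset.card_singleton v
        · have hzS' : z ∈ S.erase v := (Finset.mem_filter.mp hzT).1
          have hadjwz : adj w z := (Finset.mem_filter.mp hzT).2
          have hzv : z ≠ v := (Finset.mem_erase.mp hzS').1
          have hzw : z ≠ w := fun h => hirr w (h ▸ hadjwz)
          have hne : ord z ≠ ord w :=
            fun h => hzw (hinj (Finset.mem_coe.mpr hzS') (Finset.mem_coe.mpr hwS') h)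
          have : ord w < ord z := by
            rcases lt_or_gt_of_ne hne with h | h
            · exact absurd ⟨z, hzS', hadjwz, h⟩ hz
            · exact h
          refine Or.inl ⟨z, Finset.mem_of_mem_erase hzS', hsymm w z hadjwz, ?_⟩
          rw [if_neg hzv]; omega

/-- Wahl components, combinatorial content: in a simply-laced root system, if
`β = α_{j_1} + ⋯ + α_{j_t}` is a positive root which is a sum of pairwise distinct simple
roots, `N ≥ 1`, every `i ∈ I` with `min{⟨λ,α_i^∨⟩, ⟨μ,α_i^∨⟩} < N` satisfies that
`β − α_i` is neither zero nor a positive root, and `λ + μ − Nβ` is dominant, then some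
permutation `σ` makes the dominance system `D((N,…,N); μ, λ; j_{σ(1)},…,j_{σ(t)})` hold. -/
theorem wahl_domsys {ι M N' I : Type*} [Fintype ι] [Fintype I]
    [AddCommGroup M] [Module ℝ M] [AddCommGroup N'] [Module ℝ N']
    (P : RootSystem ι ℝ M N') (hcrys : P.IsCrystallographic) (hred : P.IsReduced)
    (b : I → ι) (hb : P.IsBase b)
    (hSL : ∀ i j : I, i ≠ j →
      P.pairing (b i) (b j) = 0 ∨ P.pairing (b i) (b j) = -1)
    (lam mu : M) (hlam : P.IsDominant b lam) (hmu : P.IsDominant b mu)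
    (Nnat : ℕ) (hN : 1 ≤ Nnat)
    {t : ℕ} (jdx : Fin t → I) (hinj : Function.Injective jdx)
    (hroot : ∃ jβ : ι, P.root jβ = ∑ r : Fin t, P.root (b (jdx r)) ∧ P.IsPositiveRoot b jβ)
    (hF : ∀ i : I, min (P.coroot' (b i) lam) (P.coroot' (b i) mu) < (Nnat : ℝ) →
      (∑ r : Fin t, P.root (b (jdx r))) - P.root (b i) ≠ 0 ∧
      ¬ ∃ j' : ι, P.root j' = (∑ r : Fin t, P.root (b (jdx r))) - P.root (b i) ∧
        P.IsPositiveRoot b j')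
    (hdom : P.IsDominant b (lam + mu - (Nnat : ℝ) • ∑ r : Fin t, P.root (b (jdx r)))) :
    ∃ σ : Equiv.Perm (Fin t), P.DomSys b (fun _ => Nnat) mu lam (jdx ∘ σ) := by
  classical
  obtain ⟨jβ, hβroot, hβpos⟩ := hroot
  set β : M := ∑ r : Fin t, P.root (b (jdx r)) with hβdef
  -- symmetry of the canonical bilinear form
  have Bsym : ∀ x y : M, P.RootForm x y = P.RootForm y x := by
    intro x y
    simp only [RootPairing.rootForm_apply_apply]
    exact Finset.sum_congr rfl fun i _ => mul_comm _ _
  -- key relation between the form and the pairing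
  have keyB : ∀ k l : ι, P.RootForm (P.root l) (P.root l) * P.pairing k l
      = 2 * P.RootForm (P.root l) (P.root k) := by
    intro k l
    have h2 := congrArg (fun z => P.toLinearMap (P.root k) z)
      (P.rootForm_self_smul_coroot l)
    simp only [map_smul, smul_eq_mul, map_nsmul, nsmul_eq_mul, Nat.cast_ofNat,
      RootPairing.root_coroot_eq_pairing, RootPairing.Polarization_apply, map_sum,
      RootPairing.root_coroot'_eq_pairing] at h2
    have h3 : (P.RootForm (P.root l)) (P.root l) = ∑ x : ι, P.pairing l x * P.pairing l x := by
      simp [RootPairing.rootForm_apply_apply, RootPairing.root_coroot'_eq_pairing]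
    simp only [RootPairing.rootForm_apply_apply, RootPairing.root_coroot'_eq_pairing]
    rw [← h3]
    exact h2
  have qpos : ∀ k : ι, 0 < P.RootForm (P.root k) (P.root k) := fun k =>
    P.rootForm_pos_of_ne_zero (Submodule.subset_span ⟨k, rfl⟩) (P.ne_zero k)
  -- the simply-laced adjacency graph on the support of β
  set adj : Fin t → Fin t → Prop := fun r s => P.pairing (b (jdx r)) (b (jdx s)) = -1
    with hadjdef
  have hAopt : ∀ r s : Fin t, r ≠ s →
      P.pairing (b (jdx r)) (b (jdx s)) = 0 ∨ P.pairing (b (jdx r)) (b (jdx s)) = -1 :=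
    fun r s h => hSL _ _ fun he => h (hinj he)
  have hirr : ∀ r, ¬ adj r r := by
    intro r h
    have h' : P.pairing (b (jdx r)) (b (jdx r)) = -1 := h
    rw [RootPairing.pairing_same] at h'
    norm_num at h'
  have hadjsymm : ∀ r s, adj r s → adj s r := by
    intro r s h
    have hrs : r ≠ s := fun he => hirr r (he ▸ h)
    have h' : P.pairing (b (jdx r)) (b (jdx s)) = -1 := h
    have e1 := keyB (b (jdx r)) (b (jdx s))
    have e2 := keyB (b (jdx s)) (b (jdx r))
    have hBs := Bsym (P.root (b (jdx s))) (P.root (b (jdx r)))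
    rcases hAopt s r hrs.symm with h0 | h1
    · exfalso
      have hq := qpos (b (jdx s))
      rw [h'] at e1
      rw [h0] at e2
      nlinarith
    · exact h1
  -- sum of Cartan pairings over a subset
  have sumA : ∀ (T : Finset (Fin t)) (r : Fin t), r ∈ T →
      ∑ s ∈ T, P.pairing (b (jdx s)) (b (jdx r))
        = 2 - ((T.filter (fun s => adj r s)).card : ℝ) := by
    intro T r hr
    rw [← Finset.add_sum_erase T _ hr, RootPairing.pairing_same]
    have hstep : ∑ s ∈ T.erase r, P.pairing (b (jdx s)) (b (jdx r))
        = ∑ s ∈ T.erase r, (if adj r s then (-1:ℝ) else 0) := by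
      refine Finset.sum_congr rfl fun s hs => ?_
      have hsr : s ≠ r := Finset.ne_of_mem_erase hs
      rcases hAopt s r hsr with h0 | h1
      · rw [if_neg, h0]
        intro hadj
        have h2 : P.pairing (b (jdx s)) (b (jdx r)) = -1 := hadjsymm r s hadj
        rw [h0] at h2
        norm_num at h2
      · rw [if_pos (hadjsymm s r h1), h1]
    rw [hstep, Finset.sum_ite, Finset.sum_const, Finset.sum_const, smul_zero, add_zero,
      Finset.filter_erase]
    have hrnot : r ∉ (T.filter (fun s => adj r s)) := fun hmem =>
      hirr r (Finset.mem_filter.mp hmem).2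
    rw [Finset.erase_eq_of_notMem hrnot]
    simp only [nsmul_eq_mul, mul_neg, mul_one]
    ring
  -- 1-degeneracy of the adjacency graph
  have H1 : ∀ T : Finset (Fin t), T.Nonempty → ∃ v ∈ T, (T.filter (adj v)).card ≤ 1 := by
    intro T hT
    by_contra hcon
    push_neg at hcon
    set γ : M := ∑ r ∈ T, P.root (b (jdx r)) with hγdef
    have hγspan : γ ∈ P.rootSpan ℝ :=
      Submodule.sum_mem _ fun r _ => Submodule.subset_span ⟨b (jdx r), rfl⟩
    have hγne : γ ≠ 0 := by
      intro h0
      have hli := linearIndependent_iff'.mp hb.linearIndependent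
      obtain ⟨r0, hr0⟩ := hT
      have himg : ∑ i ∈ T.image jdx, (1:ℝ) • P.root (b i) = γ := by
        rw [Finset.sum_image (fun x _ y _ h => hinj h)]
        simp [hγdef]
      have h1 := hli (T.image jdx) (fun _ => (1:ℝ)) (by rw [himg, h0]) (jdx r0)
        (Finset.mem_image_of_mem jdx hr0)
      exact one_ne_zero h1
    have hpos : 0 < P.RootForm γ γ := P.rootForm_pos_of_ne_zero hγspan hγne
    have hle : P.RootForm γ γ ≤ 0 := by
      have hexp : P.RootForm γ γ = ∑ r ∈ T, P.RootForm γ (P.root (b (jdx r))) := by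
        conv_lhs => rw [hγdef]
        rw [map_sum]
      rw [hexp]
      refine Finset.sum_nonpos fun r hr => ?_
      have h1 : P.RootForm γ (P.root (b (jdx r)))
          = ∑ s ∈ T, P.RootForm (P.root (b (jdx s))) (P.root (b (jdx r))) := by
        conv_lhs => rw [hγdef]
        rw [map_sum, LinearMap.sum_apply]
      have h2 : ∀ s : Fin t, P.RootForm (P.root (b (jdx s))) (P.root (b (jdx r)))
          = P.RootForm (P.root (b (jdx r))) (P.root (b (jdx r)))
            * P.pairing (b (jdx s)) (b (jdx r)) / 2 := by
        intro s
        have hB := keyB (b (jdx s)) (b (jdx r))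
        have hsw := Bsym (P.root (b (jdx r))) (P.root (b (jdx s)))
        linarith
      have hq := qpos (b (jdx r))
      have hd : 2 ≤ ((T.filter (fun s => adj r s)).card : ℝ) := by
        have := hcon r hr
        exact_mod_cast this
      calc P.RootForm γ (P.root (b (jdx r)))
          = ∑ s ∈ T, P.RootForm (P.root (b (jdx r))) (P.root (b (jdx r)))
            * P.pairing (b (jdx s)) (b (jdx r)) / 2 := by
            rw [h1]; exact Finset.sum_congr rfl fun s _ => h2 s
        _ = P.RootForm (P.root (b (jdx r))) (P.root (b (jdx r))) / 2
            * ∑ s ∈ T, P.pairing (b (jdx s)) (b (jdx r)) := by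
            rw [Finset.mul_sum]
            exact Finset.sum_congr rfl fun s _ => by ring
        _ = P.RootForm (P.root (b (jdx r))) (P.root (b (jdx r))) / 2
            * (2 - ((T.filter (fun s => adj r s)).card : ℝ)) := by rw [sumA T r hr]
        _ ≤ 0 := by nlinarith
    linarith
  -- pairing of β with a simple coroot in its support
  have hβpair : ∀ r : Fin t, P.coroot' (b (jdx r)) β
      = 2 - ((Finset.univ.filter (fun s => adj r s)).card : ℝ) := by
    intro r
    rw [hβdef, map_sum]
    rw [Finset.sum_congr rfl fun s _ => P.root_coroot'_eq_pairing (i := b (jdx r)) (j := b (jdx s))]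
    exact sumA Finset.univ r (Finset.mem_univ r)
  -- the sum over the support minus one vertex
  have hsum_erase : ∀ r : Fin t, ∑ s ∈ Finset.univ.erase r, P.root (b (jdx s))
      = β - P.root (b (jdx r)) := by
    intro r
    rw [hβdef, ← Finset.add_sum_erase Finset.univ _ (Finset.mem_univ r)]
    abel
  -- any vertex of degree ≤ 1 pairs ≥ N with both weights
  have hleaf : ∀ r : Fin t, (Finset.univ.filter (fun s => adj r s)).card ≤ 1 →
      (Nnat:ℝ) ≤ P.coroot' (b (jdx r)) lam ∧ (Nnat:ℝ) ≤ P.coroot' (b (jdx r)) mu := by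
    intro r hdeg
    by_contra hcon
    have hmin : min (P.coroot' (b (jdx r)) lam) (P.coroot' (b (jdx r)) mu) < (Nnat:ℝ) := by
      rcases not_and_or.mp hcon with h | h
      · exact min_lt_iff.mpr (Or.inl (lt_of_not_ge h))
      · exact min_lt_iff.mpr (Or.inr (lt_of_not_ge h))
    obtain ⟨hne0, hnpos⟩ := hF (jdx r) hmin
    have hposroot : ∀ j' : ι, P.root j' = β - P.root (b (jdx r)) → False := by
      intro j' hj'
      refine hnpos ⟨j', hj', ?_⟩
      refine ⟨fun i => if i ∈ (Finset.univ.erase r).image jdx then 1 else 0, ?_⟩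
      rw [hj', ← hsum_erase r, ← Finset.sum_image (f := fun i => P.root (b i))
        (g := jdx) (fun x _ y _ h => hinj h)]
      have hstep : ∀ i : I, ((if i ∈ (Finset.univ.erase r).image jdx then (1:ℕ) else 0 : ℕ):ℝ)
          • P.root (b i) = if i ∈ (Finset.univ.erase r).image jdx then P.root (b i) else 0 := by
        intro i
        by_cases hi : i ∈ (Finset.univ.erase r).image jdx <;> simp [hi]
      rw [Finset.sum_congr rfl fun i _ => hstep i, Finset.sum_ite_mem, Finset.univ_inter]
    rcases Finset.eq_empty_or_nonempty (Finset.univ.erase r) with herase | hne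
    · exact hne0 (by rw [← hsum_erase r, herase, Finset.sum_empty])
    rcases Nat.le_one_iff_eq_zero_or_eq_one.mp hdeg with hd0 | hd1
    · -- degree 0 : use reflection in β
      have hp2 : P.pairing jβ (b (jdx r)) = 2 := by
        rw [← P.root_coroot'_eq_pairing, hβroot, hβpair r, hd0]
        norm_num
      have hQpos : 0 < P.RootForm (P.root jβ) (P.root jβ) := qpos jβ
      have hqrpos : 0 < P.RootForm (P.root (b (jdx r))) (P.root (b (jdx r))) :=
        qpos (b (jdx r))
      have e1 := keyB jβ (b (jdx r))
      rw [hp2] at e1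
      have e2 := keyB (b (jdx r)) jβ
      have hBsw := Bsym (P.root (b (jdx r))) (P.root jβ)
      have hxne : P.RootForm (P.root jβ) (P.root jβ) • P.root (b (jdx r))
          - P.RootForm (P.root (b (jdx r))) (P.root (b (jdx r))) • P.root jβ ≠ 0 := by
        intro h0
        rw [sub_eq_zero] at h0
        have happ := congrArg (P.coroot' (b (jdx r))) h0
        simp only [map_smul, smul_eq_mul, P.root_coroot'_eq_pairing] at happ
        rw [RootPairing.pairing_same, hp2] at happ
        have hQq : P.RootForm (P.root jβ) (P.root jβ)
            = P.RootForm (P.root (b (jdx r))) (P.root (b (jdx r))) := by linarith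
        rw [hQq] at h0
        have hroots : P.root (b (jdx r)) = P.root jβ :=
          smul_right_injective M (ne_of_gt hqrpos) h0
        exact hne0 (by rw [← hβroot, ← hroots, sub_self])
      have hxspan : P.RootForm (P.root jβ) (P.root jβ) • P.root (b (jdx r))
          - P.RootForm (P.root (b (jdx r))) (P.root (b (jdx r))) • P.root jβ ∈ P.rootSpan ℝ :=
        Submodule.sub_mem _ (Submodule.smul_mem _ _ (Submodule.subset_span ⟨_, rfl⟩))
          (Submodule.smul_mem _ _ (Submodule.subset_span ⟨_, rfl⟩))
      have hxpos := P.rootForm_pos_of_ne_zero hxspan hxne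
      have hB1 : P.RootForm (P.root (b (jdx r))) (P.root jβ)
          = P.RootForm (P.root (b (jdx r))) (P.root (b (jdx r))) := by linarith
      have hB2 : P.RootForm (P.root jβ) (P.root (b (jdx r)))
          = P.RootForm (P.root (b (jdx r))) (P.root (b (jdx r))) := by linarith
      have hexpand : P.RootForm
          (P.RootForm (P.root jβ) (P.root jβ) • P.root (b (jdx r))
            - P.RootForm (P.root (b (jdx r))) (P.root (b (jdx r))) • P.root jβ)
          (P.RootForm (P.root jβ) (P.root jβ) • P.root (b (jdx r))
            - P.RootForm (P.root (b (jdx r))) (P.root (b (jdx r))) • P.root jβ)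
          = P.RootForm (P.root jβ) (P.root jβ)
            * P.RootForm (P.root (b (jdx r))) (P.root (b (jdx r)))
            * (P.RootForm (P.root jβ) (P.root jβ)
              - P.RootForm (P.root (b (jdx r))) (P.root (b (jdx r)))) := by
        simp only [map_sub, map_smul, LinearMap.sub_apply, LinearMap.smul_apply, smul_eq_mul]
        rw [hB1, hB2]
        ring
      rw [hexpand] at hxpos
      have hQgt : P.RootForm (P.root (b (jdx r))) (P.root (b (jdx r)))
          < P.RootForm (P.root jβ) (P.root jβ) := by
        nlinarith [mul_pos hQpos hqrpos]
      obtain ⟨z, hz⟩ := hcrys.exists_value (b (jdx r)) jβ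
      rw [algebraMap_int_eq, eq_intCast] at hz
      rw [hB2] at e2
      have hm : P.RootForm (P.root jβ) (P.root jβ) * P.pairing (b (jdx r)) jβ
          = 2 * P.RootForm (P.root (b (jdx r))) (P.root (b (jdx r))) := e2
      have hm1 : P.pairing (b (jdx r)) jβ = 1 := by
        have h0 : (0:ℝ) < P.pairing (b (jdx r)) jβ := by nlinarith
        have h2' : P.pairing (b (jdx r)) jβ < 2 := by nlinarith
        rw [← hz] at h0 h2' ⊢
        have hz0 : (0:ℤ) < z := by exact_mod_cast h0
        have hz2 : z < 2 := by exact_mod_cast h2'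
        have : z = 1 := by omega
        rw [this]
        norm_num
      have hj2 : P.root (P.reflectionPerm jβ (b (jdx r)))
          = P.root (b (jdx r)) - P.root jβ := by
        rw [P.root_reflectionPerm, P.reflection_apply_root, hm1, one_smul]
      have hj3 : P.root (P.reflectionPerm (P.reflectionPerm jβ (b (jdx r)))
          (P.reflectionPerm jβ (b (jdx r)))) = β - P.root (b (jdx r)) := by
        rw [P.root_reflectionPerm, P.reflection_apply_self, hj2, neg_sub, hβroot]
      exact hposroot _ hj3
    · -- degree 1 : reflect β in the simple root
      have hp1 : P.pairing jβ (b (jdx r)) = 1 := by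
        rw [← P.root_coroot'_eq_pairing, hβroot, hβpair r, hd1]
        norm_num
      have hj1 : P.root (P.reflectionPerm (b (jdx r)) jβ) = β - P.root (b (jdx r)) := by
        rw [P.root_reflectionPerm, P.reflection_apply_root, hp1, one_smul, hβroot]
      exact hposroot _ hj1
  -- obtain a good ordering from the graph lemma
  obtain ⟨ord, hinjord, hcondord⟩ := exists_good_order adj hadjsymm hirr H1 Finset.univ
  have hinjf : Function.Injective ord := fun x y h =>
    hinjord (by simp) (by simp) h
  set σ := Tuple.sort ord with hσdef
  have hmonoσ : StrictMono (ord ∘ σ) :=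
    (Tuple.monotone_sort ord).strictMono_of_injective (hinjf.comp σ.injective)
  have hltiff : ∀ s r : Fin t, s < r ↔ ord (σ s) < ord (σ r) := fun s r =>
    ⟨fun h => hmonoσ h, fun h => hmonoσ.lt_iff_lt.mp h⟩
  have hterm : ∀ (r s : Fin t), s ≠ r →
      (Nnat:ℝ) * P.pairing (b (jdx (σ s))) (b (jdx (σ r))) ≤ 0 := by
    intro r s hsr
    have hne : σ s ≠ σ r := fun h => hsr (σ.injective h)
    have hN0 : (0:ℝ) ≤ (Nnat:ℝ) := Nat.cast_nonneg _
    rcases hAopt (σ s) (σ r) hne with h | h <;> rw [h] <;> nlinarith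
  have comp1 : ∀ r : Fin t, (Nnat:ℝ) + ∑ s ∈ Finset.univ.filter (· < r),
      (Nnat:ℝ) * P.pairing (b (jdx (σ s))) (b (jdx (σ r)))
      ≤ P.coroot' (b (jdx (σ r))) lam := by
    intro r
    have hw0 := hlam (jdx (σ r))
    rcases (hcondord (σ r) (Finset.mem_univ _)).1 with ⟨x, _, hadjx, hlt⟩ | hdeg
    · have hσs0 : σ (σ.symm x) = x := σ.apply_symm_apply x
      have hs0r : σ.symm x < r := by
        rw [hltiff, hσs0]
        exact hlt
      have hs0F : σ.symm x ∈ Finset.univ.filter (· < r) :=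
        Finset.mem_filter.mpr ⟨Finset.mem_univ _, hs0r⟩
      have hadj' : P.pairing (b (jdx x)) (b (jdx (σ r))) = -1 := hadjx
      have hterm0 : (Nnat:ℝ) * P.pairing (b (jdx (σ (σ.symm x)))) (b (jdx (σ r)))
          = -(Nnat:ℝ) := by
        rw [hσs0, hadj']
        ring
      rw [← Finset.add_sum_erase _ _ hs0F, hterm0]
      have hrest : ∑ s ∈ (Finset.univ.filter (· < r)).erase (σ.symm x),
          (Nnat:ℝ) * P.pairing (b (jdx (σ s))) (b (jdx (σ r))) ≤ 0 :=
        Finset.sum_nonpos fun s hs => hterm r s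
          (ne_of_lt (Finset.mem_filter.mp (Finset.mem_of_mem_erase hs)).2)
      linarith
    · have h2 := (hleaf (σ r) hdeg).1
      have hrest : ∑ s ∈ Finset.univ.filter (· < r),
          (Nnat:ℝ) * P.pairing (b (jdx (σ s))) (b (jdx (σ r))) ≤ 0 :=
        Finset.sum_nonpos fun s hs => hterm r s (ne_of_lt (Finset.mem_filter.mp hs).2)
      linarith
  have comp2 : ∀ r : Fin t, (Nnat:ℝ) + ∑ s ∈ Finset.univ.filter (r < ·),
      (Nnat:ℝ) * P.pairing (b (jdx (σ s))) (b (jdx (σ r)))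
      ≤ P.coroot' (b (jdx (σ r))) mu := by
    intro r
    have hw0 := hmu (jdx (σ r))
    rcases (hcondord (σ r) (Finset.mem_univ _)).2 with ⟨x, _, hadjx, hlt⟩ | hdeg
    · have hσs0 : σ (σ.symm x) = x := σ.apply_symm_apply x
      have hs0r : r < σ.symm x := by
        rw [hltiff, hσs0]
        exact hlt
      have hs0F : σ.symm x ∈ Finset.univ.filter (r < ·) :=
        Finset.mem_filter.mpr ⟨Finset.mem_univ _, hs0r⟩
      have hadj' : P.pairing (b (jdx x)) (b (jdx (σ r))) = -1 := hadjx
      have hterm0 : (Nnat:ℝ) * P.pairing (b (jdx (σ (σ.symm x)))) (b (jdx (σ r)))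
          = -(Nnat:ℝ) := by
        rw [hσs0, hadj']
        ring
      rw [← Finset.add_sum_erase _ _ hs0F, hterm0]
      have hrest : ∑ s ∈ (Finset.univ.filter (r < ·)).erase (σ.symm x),
          (Nnat:ℝ) * P.pairing (b (jdx (σ s))) (b (jdx (σ r))) ≤ 0 :=
        Finset.sum_nonpos fun s hs => hterm r s
          (Finset.mem_filter.mp (Finset.mem_of_mem_erase hs)).2.ne'
      linarith
    · have h2 := (hleaf (σ r) hdeg).2
      have hrest : ∑ s ∈ Finset.univ.filter (r < ·),
          (Nnat:ℝ) * P.pairing (b (jdx (σ s))) (b (jdx (σ r))) ≤ 0 :=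
        Finset.sum_nonpos fun s hs => hterm r s (Finset.mem_filter.mp hs).2.ne'
      linarith
  exact ⟨σ, comp1, comp2⟩
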